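/- Let (H(s), P(s), τ) be an adiabatic process as in the context and let Ω(s) = U_τ(s)*·U_A(s). Then for all s ∈ [0,1], Ω̇(s)·P(0) = U_τ(s)*·Ṗ(s)·U_A(s)·P(0). -/

import Mathlib

open Set ContinuousLinearMap

/-- The commutatorCLM `[A,B] = AB - BA` of two continuous linear operators. -/
def commutatorCLM {H : Type*} [NormedAddCommGroup H] [InnerProductSpace ℂ H]
    (A B : H →L[ℂ] H) : H →L[ℂ] H :=
  A.comp B - B.comp A

private lemma adb_aux0 {R : Type*} [Ring R] {p q : R} (hpp : p * p = p)
    (hq : p * q + q * p = q) : p * q * p = 0 := by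
  have h : p * (p * q + q * p) * p = p * q * p := by rw [hq]
  rw [mul_add, add_mul, ← mul_assoc p p q, hpp, ← mul_assoc p q p, mul_assoc (p * q) p p, hpp] at h
  exact add_eq_left.mp h

private lemma adb_auxL {R : Type*} [Ring R] [Module ℂ R] [IsScalarTower ℂ R R]
    [SMulCommClass ℂ R R] (c : ℂ) {p q : R} (u : R) (hpp : p * p = p) (h0 : p * q * p = 0) :
    (c • 1 + (q * p - p * q)) * (p * u) = c • (p * u) + q * (p * u) := by
  rw [add_mul, sub_mul, smul_mul_assoc, one_mul, mul_assoc q p (p * u), ← mul_assoc p p u, hpp,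
    ← mul_assoc (p * q) p u, h0, zero_mul, sub_zero]

private lemma adb_aux1 {R : Type*} [Ring R] [Module ℂ R] [IsScalarTower ℂ R R]
    [SMulCommClass ℂ R R] (c : ℂ) (p q u : R) (hpp : p * p = p) (hq : p * q + q * p = q) :
    (c • 1 + (q * p - p * q)) * (p * u) = q * u + p * ((c • 1 + (q * p - p * q)) * u) := by
  have h0 : p * q * p = 0 := adb_aux0 hpp hq
  have hqu : q * u = p * (q * u) + q * (p * u) := by
    calc q * u = (p * q + q * p) * u := by rw [hq]
    _ = p * (q * u) + q * (p * u) := by rw [add_mul, mul_assoc, mul_assoc]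
  rw [adb_auxL c u hpp h0]
  rw [add_mul, sub_mul, smul_mul_assoc, one_mul, mul_add, mul_smul_comm, mul_sub,
    ← mul_assoc p (q * p) u, ← mul_assoc p q p, h0, zero_mul, ← mul_assoc p (p * q) u,
    ← mul_assoc p p q, hpp, mul_assoc p q u, zero_sub]
  nth_rewrite 1 [hqu]
  abel

private lemma adb_aux2 {R : Type*} [Ring R] [Module ℂ R] [IsScalarTower ℂ R R]
    [SMulCommClass ℂ R R] (a b ℓ : ℂ) (st hm p q u : R) (hab : b = -(a * ℓ))
    (hhp : hm * p = ℓ • p) (hpp : p * p = p) (hq : p * q + q * p = q) :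
    (a • (st * hm)) * (p * u) + st * ((b • 1 + (q * p - p * q)) * (p * u)) =
      st * (q * (p * u)) := by
  have h0 : p * q * p = 0 := adb_aux0 hpp hq
  have t1 : (a • (st * hm)) * (p * u) = (a * ℓ) • (st * (p * u)) := by
    rw [smul_mul_assoc, mul_assoc st hm (p * u), ← mul_assoc hm p u, hhp, smul_mul_assoc,
      mul_smul_comm, smul_smul]
  have t2 : st * ((b • 1 + (q * p - p * q)) * (p * u)) =
      b • (st * (p * u)) + st * (q * (p * u)) := by
    rw [adb_auxL b u hpp h0, mul_add, mul_smul_comm]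
  rw [t1, t2, hab, neg_smul, ← add_assoc, add_neg_cancel, zero_add]

/-- with `Ω(s) = U_τ(s)* U_A(s)`, the derivative of `Ω` satisfies
`Ω̇(s) P(0) = U_τ(s)* Ṗ(s) U_A(s) P(0)` for all `s ∈ [0,1]`. -/
theorem stmt9
    {H : Type*} [NormedAddCommGroup H] [InnerProductSpace ℂ H] [FiniteDimensional ℂ H]
    (τ : ℝ) (hτ : 0 < τ)
    (Ham Ham' Ham'' : ℝ → H →L[ℂ] H)
    (hHamSA : ∀ s ∈ Icc (0:ℝ) 1, IsSelfAdjoint (Ham s))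
    (hHamD : ∀ s ∈ Icc (0:ℝ) 1, HasDerivWithinAt Ham (Ham' s) (Icc 0 1) s)
    (hHamD2 : ∀ s ∈ Icc (0:ℝ) 1, HasDerivWithinAt Ham' (Ham'' s) (Icc 0 1) s)
    (hHamC2 : ContinuousOn Ham'' (Icc 0 1))
    (P P' : ℝ → H →L[ℂ] H)
    (hPD : ∀ s ∈ Icc (0:ℝ) 1, HasDerivWithinAt P (P' s) (Icc 0 1) s)
    (hPC : ContinuousOn P' (Icc 0 1))
    (hPproj : ∀ s ∈ Icc (0:ℝ) 1, (P s).comp (P s) = P s)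
    (hPsa : ∀ s ∈ Icc (0:ℝ) 1, IsSelfAdjoint (P s))
    (hPrank : ∀ s ∈ Icc (0:ℝ) 1, Module.finrank ℂ (LinearMap.range (P s).toLinearMap) = 1)
    (lam : ℝ → ℝ) (hlam : ContinuousOn lam (Icc 0 1))
    (heig : ∀ s ∈ Icc (0:ℝ) 1, (Ham s).comp (P s) = (lam s : ℂ) • P s)
    (UA : ℝ → H →L[ℂ] H) (hUA0 : UA 0 = 1)
    (hUAD : ∀ s ∈ Icc (0:ℝ) 1,
      HasDerivWithinAt UA
        ((-Complex.I * (τ : ℂ)) •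
          (((lam s : ℂ) • (1 : H →L[ℂ] H)
            + (Complex.I / (τ : ℂ)) • commutatorCLM (P' s) (P s)).comp (UA s)))
        (Icc 0 1) s)
    (Utau : ℝ → H →L[ℂ] H) (hUtau0 : Utau 0 = 1)
    (hUtauD : ∀ s ∈ Icc (0:ℝ) 1,
      HasDerivWithinAt Utau ((-Complex.I * (τ : ℂ)) • ((Ham s).comp (Utau s)))
        (Icc 0 1) s) :
    ∀ s ∈ Icc (0:ℝ) 1, ∃ Ω' : H →L[ℂ] H,
      HasDerivWithinAt (fun r => (ContinuousLinearMap.adjoint (Utau r)).comp (UA r))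
        Ω' (Icc 0 1) s ∧
      Ω'.comp (P 0) =
        (ContinuousLinearMap.adjoint (Utau s)).comp ((P' s).comp ((UA s).comp (P 0))) := by
  classical
  have hτC : (τ : ℂ) ≠ 0 := Complex.ofReal_ne_zero.2 hτ.ne'
  have hUAc : ContinuousOn UA (Icc 0 1) := fun t ht => (hUAD t ht).continuousWithinAt
  have hUtc : ContinuousOn Utau (Icc 0 1) := fun t ht => (hUtauD t ht).continuousWithinAt
  have hPc : ContinuousOn P (Icc 0 1) := fun t ht => (hPD t ht).continuousWithinAt
  set A : ℝ → (H →L[ℂ] H) := fun t =>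
    (-Complex.I * (τ : ℂ) * (lam t : ℂ)) • (1 : H →L[ℂ] H) + (P' t * P t - P t * P' t)
    with hAdef
  have hAt : ∀ t, A t = (-Complex.I * (τ : ℂ) * (lam t : ℂ)) • (1 : H →L[ℂ] H)
      + (P' t * P t - P t * P' t) := fun t => by rw [hAdef]
  have hAt2 : ∀ t, A t = (-Complex.I * (τ : ℂ)) •
      ((lam t : ℂ) • (1 : H →L[ℂ] H) + (Complex.I / (τ : ℂ)) • commutatorCLM (P' t) (P t)) := by
    intro t
    rw [hAt t]
    unfold commutatorCLM
    rw [← mul_def, ← mul_def, smul_add, smul_smul, smul_smul]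
    have h1 : -Complex.I * (τ : ℂ) * (Complex.I / (τ : ℂ)) = 1 := by
      field_simp
      linear_combination (-1 : ℂ) * Complex.I_mul_I
    rw [h1, one_smul]
  have hUAD' : ∀ t ∈ Icc (0:ℝ) 1, HasDerivWithinAt UA (A t * UA t) (Icc 0 1) t := by
    intro t ht
    have h := hUAD t ht
    rw [mul_def, hAt2 t, smul_comp]
    exact h
  have hP2 : ∀ t ∈ Icc (0:ℝ) 1, P t * P t = P t := fun t ht => by
    rw [mul_def]; exact hPproj t ht
  have hPP' : ∀ t ∈ Icc (0:ℝ) 1, P t * P' t + P' t * P t = P' t := by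
    intro t ht
    have h1 : HasDerivWithinAt (fun r => P r * P r) (P' t * P t + P t * P' t) (Icc 0 1) t :=
      (hPD t ht).mul (hPD t ht)
    have h2 : HasDerivWithinAt P (P' t * P t + P t * P' t) (Icc 0 1) t :=
      h1.congr (fun r hr => (hP2 r hr).symm) (hP2 t ht).symm
    have h3 := h2.derivWithin (uniqueDiffOn_Icc_zero_one t ht)
    have h4 := (hPD t ht).derivWithin (uniqueDiffOn_Icc_zero_one t ht)
    rw [add_comm]
    rw [← h3, h4]
  -- continuity and boundedness of A
  have hA_cont : ContinuousOn A (Icc 0 1) := by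
    rw [hAdef]
    refine ContinuousOn.add (ContinuousOn.fun_smul ?_ continuousOn_const)
      ((hPC.mul hPc).sub (hPc.mul hPC))
    exact continuousOn_const.mul (Complex.continuous_ofReal.comp_continuousOn hlam)
  obtain ⟨C, hC⟩ := isCompact_Icc.exists_bound_of_continuousOn hA_cont
  set K : NNReal := ⟨max C 0, le_max_right _ _⟩ with hK
  set sets : ℝ → Set (H →L[ℂ] H) := fun t => if t ∈ Icc (0:ℝ) 1 then univ else ∅ with hsets
  have hv : ∀ t, LipschitzOnWith K (fun x => A t * x) (sets t) := by
    intro t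
    by_cases ht : t ∈ Icc (0:ℝ) 1
    · rw [hsets]
      simp only [ht, if_true]
      rw [lipschitzOnWith_univ]
      apply LipschitzWith.of_dist_le_mul
      intro x y
      rw [dist_eq_norm, dist_eq_norm, ← mul_sub]
      calc ‖A t * (x - y)‖ ≤ ‖A t‖ * ‖x - y‖ := norm_mul_le _ _
        _ ≤ (K : ℝ) * ‖x - y‖ := by
            refine mul_le_mul_of_nonneg_right ?_ (norm_nonneg _)
            exact (hC t ht).trans (le_max_left _ _)
    · rw [hsets]
      simp only [ht, if_false]
      exact lipschitzOnWith_empty _ _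
  have hmem : ∀ t ∈ Ico (0:ℝ) 1, Icc (0:ℝ) 1 ∈ nhdsWithin t (Ici t) := by
    intro t ht
    refine mem_nhdsWithin.2 ⟨Iio 1, isOpen_Iio, ht.2, ?_⟩
    rintro x ⟨hx1, hx2⟩
    exact ⟨ht.1.trans hx2, hx1.le⟩
  have hEq : EqOn (fun t => UA t * P 0) (fun t => P t * UA t) (Icc 0 1) := by
    refine ODE_solution_unique_of_mem_Icc_right (v := fun t x => A t * x) (s := sets) (K := K)
      (fun t _ => hv t) (hUAc.mul continuousOn_const) ?_ ?_ (hPc.mul hUAc) ?_ ?_ ?_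
    · intro t ht
      have hD := ((hUAD' t (Ico_subset_Icc_self ht)).mul_const (P 0)).mono_of_mem_nhdsWithin
        (hmem t ht)
      rw [mul_assoc] at hD
      exact hD
    · intro t ht
      rw [hsets]
      simp only [if_pos (Ico_subset_Icc_self ht)]
      trivial
    · intro t ht
      have htI := Ico_subset_Icc_self ht
      have hD := ((hPD t htI).mul (hUAD' t htI)).mono_of_mem_nhdsWithin (hmem t ht)
      have halg : A t * (P t * UA t) = P' t * UA t + P t * (A t * UA t) := by
        rw [hAt t]
        exact adb_aux1 _ _ _ _ (hP2 t htI) (hPP' t htI)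
      show HasDerivWithinAt (fun t => P t * UA t) (A t * (P t * UA t)) (Ici t) t
      rw [halg]
      exact hD
    · intro t ht
      rw [hsets]
      simp only [if_pos (Ico_subset_Icc_self ht)]
      trivial
    · rw [hUA0, one_mul, mul_one]
  have hinter : ∀ t ∈ Icc (0:ℝ) 1, UA t * P 0 = P t * UA t := fun t ht => hEq ht
  intro s hs
  refine ⟨star ((-Complex.I * (τ : ℂ)) • (Ham s * Utau s)) * UA s
      + star (Utau s) * (A s * UA s), ?_, ?_⟩
  · have hUt' : HasDerivWithinAt Utau ((-Complex.I * (τ : ℂ)) • (Ham s * Utau s)) (Icc 0 1) s := by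
      have h := hUtauD s hs
      rwa [← mul_def] at h
    have hmul := hUt'.star.mul (hUAD' s hs)
    have hfun : (fun r => (ContinuousLinearMap.adjoint (Utau r)).comp (UA r))
        = fun r => star (Utau r) * UA r := by
      funext r
      rw [mul_def, star_eq_adjoint]
    rw [hfun]
    exact hmul
  · have hint := hinter s hs
    have hstc : star (-Complex.I * (τ : ℂ)) = Complex.I * (τ : ℂ) := by
      simp [Complex.star_def, map_mul, Complex.conj_ofReal]
    have hHm : star (Ham s) = Ham s := (hHamSA s hs).star_eq
    have hHP : Ham s * P s = (lam s : ℂ) • P s := by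
      rw [mul_def]; exact heig s hs
    rw [← star_eq_adjoint, ← mul_def, ← mul_def, ← mul_def, ← mul_def, add_mul]
    simp only [mul_assoc]
    simp only [hint]
    rw [star_smul, hstc, star_mul, hHm, hAt s]
    exact adb_aux2 (Complex.I * (τ : ℂ)) (-Complex.I * (τ : ℂ) * (lam s : ℂ)) ((lam s : ℂ))
      (star (Utau s)) (Ham s) (P s) (P' s) (UA s) (by ring) hHP (hP2 s hs) (hPP' s hs)
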